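/- Let E₁, …, E_m, F be normed spaces and P an (n₁, …, n_m)-homogeneous polynomial. If P is bounded by C on the open ball of radius r centered at some point (a₁, …, a_m) of E₁ × ⋯ × E_m, then P is bounded by C · (n₁^{n₁}/n₁!) ⋯ (n_m^{n_m}/n_m!) on the open ball of radius r centered at the origin. -/

import Mathlib

open Finset Polynomial

/-- The `n+1` equally spaced interpolation nodes in `[-1, 1]`. -/
noncomputable def nds (n : ℕ) : ℕ → ℝ := fun k => (2 * k - n) / n

lemma nds_sub (n j k : ℕ) : nds n k - nds n j = (2 * ((k : ℝ) - j)) / n := by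
  unfold nds; ring

lemma nds_inj {n : ℕ} (hn : 0 < n) : Set.InjOn (nds n) (range (n + 1)) := by
  intro j _ k _ h
  have hn' : (n : ℝ) ≠ 0 := Nat.cast_ne_zero.mpr hn.ne'
  unfold nds at h
  field_simp at h
  have h' : (j : ℝ) = k := by linarith
  exact_mod_cast h'

lemma prod_abs_sub (n k : ℕ) (hk : k ≤ n) :
    ∏ j ∈ (range (n + 1)).erase k, |(k : ℝ) - j| =
      (Nat.factorial k : ℝ) * (Nat.factorial (n - k) : ℝ) := by
  have hsplit : (range (n + 1)).erase k = range k ∪ Ico (k + 1) (n + 1) := by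
    ext j
    simp only [mem_erase, mem_range, mem_union, mem_Ico]
    omega
  have hdisj : Disjoint (range k) (Ico (k + 1) (n + 1)) := by
    rw [Finset.disjoint_left]
    intro j hj hj'
    simp [mem_range, mem_Ico] at hj hj'
    omega
  rw [hsplit, Finset.prod_union hdisj]
  have h1 : ∏ j ∈ range k, |(k : ℝ) - j| = (Nat.factorial k : ℝ) := by
    have : ∀ j ∈ range k, |(k : ℝ) - j| = ((k - j : ℕ) : ℝ) := by
      intro j hj
      rw [mem_range] at hj
      rw [Nat.cast_sub hj.le, abs_of_pos]
      have : (j : ℝ) < k := Nat.cast_lt.mpr hj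
      linarith
    rw [Finset.prod_congr rfl this, ← Nat.cast_prod]
    norm_cast
    have heq : ∏ i ∈ range k, (k - i) = ∏ i ∈ range k, (i + 1) := by
      conv_rhs => rw [← Finset.prod_range_reflect (fun j => j + 1) k]
      exact Finset.prod_congr rfl fun j hj => by rw [mem_range] at hj; omega
    rw [heq, Finset.prod_range_add_one_eq_factorial]
  have h2 : ∏ j ∈ Ico (k + 1) (n + 1), |(k : ℝ) - j| = (Nat.factorial (n - k) : ℝ) := by
    have : ∀ j ∈ Ico (k + 1) (n + 1), |(k : ℝ) - j| = ((j - k : ℕ) : ℝ) := by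
      intro j hj
      rw [mem_Ico] at hj
      rw [abs_sub_comm, Nat.cast_sub (by omega), abs_of_pos]
      have : (k : ℝ) < j := Nat.cast_lt.mpr (by omega)
      linarith
    rw [Finset.prod_congr rfl this, ← Nat.cast_prod]
    norm_cast
    rw [Finset.prod_Ico_eq_prod_range]
    have : ∀ i ∈ range (n + 1 - (k + 1)), (k + 1 + i - k) = i + 1 := fun i _ => by omega
    rw [Finset.prod_congr rfl this, Finset.prod_range_add_one_eq_factorial]
    congr 1
    omega
  rw [h1, h2]

lemma abs_nodalWeight (n k : ℕ) (hn : 0 < n) (hk : k ≤ n) :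
    |Lagrange.nodalWeight (range (n + 1)) (nds n) k| =
      ((n : ℝ) / 2) ^ n / ((Nat.factorial k : ℝ) * (Nat.factorial (n - k) : ℝ)) := by
  have hn' : (n : ℝ) ≠ 0 := Nat.cast_ne_zero.mpr hn.ne'
  rw [Lagrange.nodalWeight, Finset.abs_prod]
  have : ∀ j ∈ (range (n + 1)).erase k,
      |(nds n k - nds n j)⁻¹| = ((n : ℝ) / 2) * |(k : ℝ) - j|⁻¹ := by
    intro j hj
    rw [nds_sub, abs_inv]
    rw [abs_div, abs_mul]
    rw [abs_of_pos (by positivity : (0:ℝ) < (n:ℝ))]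
    rw [abs_of_pos (by norm_num : (0:ℝ) < 2)]
    rw [inv_div, div_eq_mul_inv, mul_inv]
    ring
  rw [Finset.prod_congr rfl this, Finset.prod_mul_distrib, Finset.prod_const,
    Finset.prod_inv_distrib, prod_abs_sub n k hk]
  have hcard : #((range (n + 1)).erase k) = n := by
    rw [Finset.card_erase_of_mem (by simp; omega), Finset.card_range]
    omega
  rw [hcard, div_eq_mul_inv]
  ring

lemma sum_abs_nodalWeight (n : ℕ) (hn : 0 < n) :
    ∑ k ∈ range (n + 1), |Lagrange.nodalWeight (range (n + 1)) (nds n) k| =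
      (n : ℝ) ^ n / (Nat.factorial n : ℝ) := by
  have h1 : ∀ k ∈ range (n + 1), |Lagrange.nodalWeight (range (n + 1)) (nds n) k| =
      ((n : ℝ) / 2) ^ n / (Nat.factorial n : ℝ) * (n.choose k : ℝ) := by
    intro k hk
    rw [mem_range] at hk
    rw [abs_nodalWeight n k hn (by omega)]
    have hch : (n.choose k : ℝ) * (Nat.factorial k : ℝ) * (Nat.factorial (n - k) : ℝ)
        = (Nat.factorial n : ℝ) := by
      exact_mod_cast congrArg (Nat.cast (R := ℝ))
        (Nat.choose_mul_factorial_mul_factorial (by omega : k ≤ n))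
    rw [div_mul_eq_mul_div, div_eq_div_iff (by positivity) (by positivity), ← hch]
    ring
  rw [Finset.sum_congr rfl h1, ← Finset.mul_sum]
  have h2 : ∑ k ∈ range (n + 1), (n.choose k : ℝ) = (2 : ℝ) ^ n := by
    exact_mod_cast congrArg (Nat.cast (R := ℝ)) (Nat.sum_range_choose n)
  rw [h2]
  have h3 : ((n : ℝ) / 2) ^ n * 2 ^ n = (n : ℝ) ^ n := by
    rw [← mul_pow, div_mul_cancel₀]
    norm_num
  rw [div_mul_eq_mul_div, h3]

lemma basis_coeff {ι : Type*} [DecidableEq ι] {F : Type*} [Field F] (s : Finset ι) (v : ι → F)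
    (hvs : Set.InjOn v s) (i : ι) (hi : i ∈ s) :
    (Lagrange.basis s v i).coeff (#s - 1) = Lagrange.nodalWeight s v i := by
  have h1 : (Lagrange.basis s v i).natDegree = #s - 1 := Lagrange.natDegree_basis hvs hi
  rw [← h1, ← Polynomial.leadingCoeff, Lagrange.basis, Polynomial.leadingCoeff_prod,
    Lagrange.nodalWeight]
  refine Finset.prod_congr rfl fun j hj => ?_
  have hij : v i ≠ v j := by
    have hjs : j ∈ s := Finset.mem_of_mem_erase hj
    intro h
    exact (Finset.ne_of_mem_erase hj).symm (hvs hi hjs h)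
  rw [Lagrange.basisDivisor, Polynomial.leadingCoeff_mul, Polynomial.leadingCoeff_C,
    (Polynomial.monic_X_sub_C (v j)).leadingCoeff, mul_one]

lemma coeff_eq_sum_nodalWeight {ι : Type*} [DecidableEq ι] {F : Type*} [Field F]
    (s : Finset ι) (v : ι → F) (hvs : Set.InjOn v s) (f : F[X]) (hf : f.degree < #s) :
    f.coeff (#s - 1) = ∑ i ∈ s, Lagrange.nodalWeight s v i * f.eval (v i) := by
  conv_lhs => rw [Lagrange.eq_interpolate hvs hf]
  rw [Lagrange.interpolate_apply, Polynomial.finset_sum_coeff]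
  refine Finset.sum_congr rfl fun i hi => ?_
  rw [Polynomial.coeff_C_mul, basis_coeff s v hvs i hi]
  ring

lemma expand_poly {E F : Type*} [NormedAddCommGroup E] [NormedSpace ℝ E]
    [NormedAddCommGroup F] [NormedSpace ℝ F] (n : ℕ)
    (A : MultilinearMap ℝ (fun _ : Fin n => E) F) (a₀ y : E) (c : ℝ) :
    A (fun _ => a₀ + c • y) = ∑ s : Finset (Fin n),
      c ^ (n - #s) • A (s.piecewise (fun _ => a₀) (fun _ => y)) := by
  have h0 : (fun _ : Fin n => a₀ + c • y) = (fun _ : Fin n => a₀) + (fun _ => c • y) := rfl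
  rw [h0, A.map_add_univ]
  refine Finset.sum_congr rfl fun s _ => ?_
  have h1 : s.piecewise (fun _ : Fin n => a₀) (fun _ => c • y)
      = sᶜ.piecewise (fun i => c • (s.piecewise (fun _ : Fin n => a₀) (fun _ => y)) i)
          (s.piecewise (fun _ : Fin n => a₀) (fun _ => y)) := by
    funext i
    by_cases hi : i ∈ s <;> simp [Finset.piecewise, hi]
  rw [h1, A.map_piecewise_smul, Finset.prod_const, Finset.card_compl, Fintype.card_fin]

lemma key_identity {E F : Type*} [NormedAddCommGroup E] [NormedSpace ℝ E]
    [NormedAddCommGroup F] [NormedSpace ℝ F] (n : ℕ) (hn : 0 < n)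
    (A : MultilinearMap ℝ (fun _ : Fin n => E) F) (a₀ y : E) :
    A (fun _ => y) = ∑ k ∈ range (n + 1),
      Lagrange.nodalWeight (range (n + 1)) (nds n) k • A (fun _ => a₀ + nds n k • y) := by
  set w := fun k => Lagrange.nodalWeight (range (n + 1)) (nds n) k with hw
  have hsum : ∀ d : ℕ, d ≤ n →
      ∑ k ∈ range (n + 1), w k * (nds n k) ^ d = if n = d then 1 else 0 := by
    intro d hd
    have hdeg : ((X : ℝ[X]) ^ d).degree < (#(range (n + 1)) : ℕ) := by
      rw [Polynomial.degree_X_pow, Finset.card_range]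
      exact_mod_cast Nat.lt_succ_of_le hd
    have := coeff_eq_sum_nodalWeight (range (n + 1)) (nds n) (nds_inj hn) (X ^ d) hdeg
    rw [Finset.card_range] at this
    simp only [Nat.add_sub_cancel, Polynomial.coeff_X_pow, Polynomial.eval_pow,
      Polynomial.eval_X] at this
    rw [← this]
  refine Eq.symm ?_
  calc ∑ k ∈ range (n + 1), w k • A (fun _ => a₀ + nds n k • y)
      = ∑ k ∈ range (n + 1), ∑ s : Finset (Fin n),
          (w k * (nds n k) ^ (n - #s)) • A (s.piecewise (fun _ => a₀) (fun _ => y)) := by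
        refine Finset.sum_congr rfl fun k _ => ?_
        rw [expand_poly n A a₀ y (nds n k), Finset.smul_sum]
        exact Finset.sum_congr rfl fun s _ => (smul_smul _ _ _)
    _ = ∑ s : Finset (Fin n), (∑ k ∈ range (n + 1), w k * (nds n k) ^ (n - #s)) •
          A (s.piecewise (fun _ => a₀) (fun _ => y)) := by
        rw [Finset.sum_comm]
        exact Finset.sum_congr rfl fun s _ => (Finset.sum_smul).symm
    _ = A (fun _ => y) := by
        have hcard : ∀ s : Finset (Fin n), #s ≤ n := by
          intro s
          simpa using Finset.card_le_univ s
        rw [Finset.sum_eq_single ∅]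
        · rw [hsum (n - #(∅ : Finset (Fin n))) (by omega)]
          simp
        · intro s _ hs
          rw [hsum (n - #s) (by omega)]
          have h1 : 0 < #s := Finset.card_pos.mpr (Finset.nonempty_iff_ne_empty.mpr hs)
          have h2 : ¬ (n = n - #s) := by
            have := hcard s
            omega
          rw [if_neg h2, zero_smul]
        · intro h
          exact absurd (Finset.mem_univ ∅) h

lemma onevar {E F : Type*} [NormedAddCommGroup E] [NormedSpace ℝ E]
    [NormedAddCommGroup F] [NormedSpace ℝ F] (n : ℕ)
    (A : MultilinearMap ℝ (fun _ : Fin n => E) F) (a₀ : E) (r C : ℝ)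
    (hb : ∀ v : E, dist v a₀ < r → ‖A (fun _ => v)‖ ≤ C)
    (y : E) (hy : ‖y‖ < r) :
    ‖A (fun _ => y)‖ ≤ C * ((n : ℝ) ^ n / (Nat.factorial n : ℝ)) := by
  have hr : 0 < r := lt_of_le_of_lt (norm_nonneg y) hy
  rcases Nat.eq_zero_or_pos n with hn | hn
  · subst hn
    have h0 : A (fun _ => y) = A (fun _ => a₀) := congrArg A (funext fun i => i.elim0)
    rw [h0]
    have := hb a₀ (by simpa using hr)
    simpa using this
  · rw [key_identity n hn A a₀ y]
    refine le_trans (norm_sum_le _ _) ?_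
    have hterm : ∀ k ∈ range (n + 1),
        ‖Lagrange.nodalWeight (range (n + 1)) (nds n) k • A (fun _ => a₀ + nds n k • y)‖
        ≤ |Lagrange.nodalWeight (range (n + 1)) (nds n) k| * C := by
      intro k hk
      rw [norm_smul, Real.norm_eq_abs]
      refine mul_le_mul_of_nonneg_left ?_ (abs_nonneg _)
      refine hb _ ?_
      rw [dist_eq_norm, add_sub_cancel_left, norm_smul, Real.norm_eq_abs]
      have h1 : |nds n k| ≤ 1 := by
        rw [mem_range] at hk
        have hk' : (k : ℝ) ≤ n := Nat.cast_le.mpr (by omega)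
        have hk0 : (0 : ℝ) ≤ k := Nat.cast_nonneg k
        have hnp : (0 : ℝ) < n := by exact_mod_cast hn
        unfold nds
        rw [abs_div, abs_of_pos hnp, div_le_one hnp, abs_le]
        constructor <;> linarith
      calc |nds n k| * ‖y‖ ≤ 1 * ‖y‖ := mul_le_mul_of_nonneg_right h1 (norm_nonneg y)
        _ < r := by rwa [one_mul]
    refine le_trans (Finset.sum_le_sum hterm) ?_
    rw [← Finset.sum_mul, sum_abs_nodalWeight n hn, mul_comm]

/-- `P : E₁ × ⋯ × E_m → F` is an `(n₁, …, n_m)`-homogeneous polynomial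
(multipolynomial): separately, in each variable `i`, it is an `n i`-homogeneous
polynomial, i.e. the diagonal of some `n i`-linear map. -/
def IsMultiPoly {m : ℕ} {E : Fin m → Type*} [∀ i, NormedAddCommGroup (E i)]
    [∀ i, NormedSpace ℝ (E i)] {F : Type*} [NormedAddCommGroup F] [NormedSpace ℝ F]
    (n : Fin m → ℕ) (P : (∀ i, E i) → F) : Prop :=
  ∀ (i : Fin m) (x : ∀ i, E i), ∃ A : MultilinearMap ℝ (fun _ : Fin (n i) => E i) F,
    ∀ y : E i, P (Function.update x i y) = A (fun _ => y)
theorem stmt2 {m : ℕ} {E : Fin m → Type*} [∀ i, NormedAddCommGroup (E i)]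
    [∀ i, NormedSpace ℝ (E i)] {F : Type*} [NormedAddCommGroup F] [NormedSpace ℝ F]
    (n : Fin m → ℕ) (P : (∀ i, E i) → F) (hP : IsMultiPoly n P)
    (a : ∀ i, E i) (r C : ℝ)
    (hbound : ∀ x ∈ Metric.ball a r, ‖P x‖ ≤ C) :
    ∀ x ∈ Metric.ball (0 : ∀ i, E i) r,
      ‖P x‖ ≤ C * ∏ i, ((n i : ℝ) ^ (n i) / (Nat.factorial (n i) : ℝ)) := by
  intro x hx
  rw [Metric.mem_ball] at hx
  have hr : 0 < r := lt_of_le_of_lt dist_nonneg hx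
  have key : ∀ S : Finset (Fin m), ∀ y : ∀ i, E i,
      (∀ i, dist (y i) (if i ∈ S then 0 else a i) < r) →
      ‖P y‖ ≤ C * ∏ i ∈ S, ((n i : ℝ) ^ (n i) / (Nat.factorial (n i) : ℝ)) := by
    intro S
    induction S using Finset.induction_on with
    | empty =>
      intro y hy
      simp only [Finset.prod_empty, mul_one]
      refine hbound y ?_
      rw [Metric.mem_ball, dist_pi_lt_iff hr]
      intro i
      simpa using hy i
    | @insert j S hj ih =>
      intro y hy
      obtain ⟨A, hA⟩ := hP j y
      have hb : ∀ v : E j, dist v (a j) < r → ‖A (fun _ => v)‖ ≤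
          C * ∏ i ∈ S, ((n i : ℝ) ^ (n i) / (Nat.factorial (n i) : ℝ)) := by
        intro v hv
        rw [← hA v]
        refine ih (Function.update y j v) ?_
        intro i
        by_cases hij : i = j
        · subst hij
          rw [Function.update_self, if_neg hj]
          exact hv
        · rw [Function.update_of_ne hij]
          have h := hy i
          rwa [if_congr (show (i ∈ insert j S) ↔ (i ∈ S) by simp [Finset.mem_insert, hij])
            rfl rfl] at h
      have hyj : ‖y j‖ < r := by
        have h := hy j
        rw [if_pos (Finset.mem_insert_self j S)] at h
        rwa [dist_zero_right] at h
      have h1 := onevar (n j) A (a j) r _ hb (y j) hyj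
      rw [← hA (y j), Function.update_eq_self] at h1
      rw [Finset.prod_insert hj]
      calc ‖P y‖ ≤ (C * ∏ i ∈ S, ((n i : ℝ) ^ (n i) / (Nat.factorial (n i) : ℝ))) *
            ((n j : ℝ) ^ (n j) / (Nat.factorial (n j) : ℝ)) := h1
        _ = C * ((n j : ℝ) ^ (n j) / (Nat.factorial (n j) : ℝ) *
            ∏ i ∈ S, ((n i : ℝ) ^ (n i) / (Nat.factorial (n i) : ℝ))) := by ring
  have := key Finset.univ x (by
    intro i
    simp only [Finset.mem_univ, if_pos]
    exact (dist_pi_lt_iff hr).mp hx i)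
  simpa using this
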